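/- Let u : ℝ → ℝ be twice continuously differentiable and let x ∈ ℝ. Then (3/δ³)·∫_{x−δ}^{x+δ} (u(y) − u(x)) dy tends to u''(x) as δ → 0⁺. Equivalently, the nonlocal Laplacian L_δ u(x) = 2·∫_ℝ γ_{1,c}(x,y)·(u(y) − u(x)) dy with constant one-dimensional kernel γ_{1,c}(x,y) = 3/(2δ³) for |y − x| ≤ δ and 0 otherwise converges to the local Laplacian u''(x) in the limit of vanishing horizon. -/

import Mathlib

open MeasureTheory Filter

/-- The one-dimensional nonlocal Laplacian with constant kernel
`γ₁c(x,y) = 3/(2δ³)` for `|y−x| ≤ δ` (and `0` otherwise) converges, as the horizon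
`δ → 0⁺`, to the local Laplacian `u''(x)` for every `C²` function `u`. -/
theorem nonlocal_laplacian_constant_kernel_1d_limit
    (u : ℝ → ℝ) (hu : ContDiff ℝ 2 u) (x : ℝ) :
    Tendsto (fun δ : ℝ => (3 / δ ^ 3) * ∫ y in (x - δ)..(x + δ), (u y - u x))
      (nhdsWithin 0 (Set.Ioi 0)) (nhds (deriv (deriv u) x)) ∧
    Tendsto (fun δ : ℝ =>
        2 * ∫ y : ℝ, (if |y - x| ≤ δ then 3 / (2 * δ ^ 3) else 0) * (u y - u x))
      (nhdsWithin 0 (Set.Ioi 0)) (nhds (deriv (deriv u) x)) := by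
  set c := deriv u x with hc
  set m := deriv (deriv u) x with hm
  have hu1 : ContDiff ℝ 1 (deriv u) := by
    have h : ContDiff ℝ (1 + 1) u := by exact_mod_cast hu
    exact (contDiff_succ_iff_deriv.mp h).2.2
  have hud : Differentiable ℝ u := hu.differentiable two_ne_zero
  have hd2 : HasDerivAt (deriv u) m x := ((hu1.differentiable one_ne_zero) x).hasDerivAt
  have hucont : Continuous u := hu.continuous
  set φ : ℝ → ℝ := fun y => u y - u x - c * (y - x) - m / 2 * (y - x) ^ 2 with hφ
  have hφcont : Continuous φ := by
    fun_prop
  have hφx : φ x = 0 := by simp [hφ]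
  have hφderiv : ∀ t, HasDerivAt φ (deriv u t - c - m * (t - x)) t := by
    intro t
    have h1 : HasDerivAt u (deriv u t) t := (hud t).hasDerivAt
    have h2 : HasDerivAt (fun y : ℝ => c * (y - x)) c t := by
      simpa using ((hasDerivAt_id t).sub_const x).const_mul c
    have h3 : HasDerivAt (fun y : ℝ => m / 2 * (y - x) ^ 2) (m * (t - x)) t := by
      have h := (((hasDerivAt_id t).sub_const x).pow 2).const_mul (m / 2)
      refine h.congr_deriv ?_
      simp only [id_eq]
      ring
    exact ((h1.sub_const (u x)).sub h2).sub h3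
  -- splitting identity
  have hsplit : ∀ δ : ℝ, 0 < δ →
      (3 / δ ^ 3) * ∫ y in (x - δ)..(x + δ), (u y - u x)
        = m + (3 / δ ^ 3) * ∫ y in (x - δ)..(x + δ), φ y := by
    intro δ hδ
    have hcont2 : Continuous (fun y : ℝ => c * (y - x) + m / 2 * (y - x) ^ 2) := by
      fun_prop
    have e1 : (∫ y in (x - δ)..(x + δ), (u y - u x))
        = (∫ y in (x - δ)..(x + δ), φ y)
          + ∫ y in (x - δ)..(x + δ), (c * (y - x) + m / 2 * (y - x) ^ 2) := by
      rw [← intervalIntegral.integral_add (hφcont.intervalIntegrable _ _)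
        (hcont2.intervalIntegrable _ _)]
      apply intervalIntegral.integral_congr
      intro y _
      simp only [hφ]
      ring
    have ia : (∫ y in (x - δ)..(x + δ), (y - x)) = 0 := by
      rw [intervalIntegral.integral_comp_sub_right (fun y => y) x,
        show x - δ - x = -δ by ring, show x + δ - x = δ by ring, integral_id]
      ring
    have ib : (∫ y in (x - δ)..(x + δ), (y - x) ^ 2) = 2 * δ ^ 3 / 3 := by
      rw [intervalIntegral.integral_comp_sub_right (fun y => y ^ 2) x,
        show x - δ - x = -δ by ring, show x + δ - x = δ by ring, integral_pow]
      norm_num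
      ring
    have e2 : (∫ y in (x - δ)..(x + δ), (c * (y - x) + m / 2 * (y - x) ^ 2))
        = m * δ ^ 3 / 3 := by
      rw [intervalIntegral.integral_add
        ((by fun_prop : Continuous (fun y : ℝ => c * (y - x))).intervalIntegrable _ _)
        ((by fun_prop : Continuous (fun y : ℝ => m / 2 * (y - x) ^ 2)).intervalIntegrable _ _),
        intervalIntegral.integral_const_mul, intervalIntegral.integral_const_mul, ia, ib]
      ring
    rw [e1, e2]
    have hδ' : δ ≠ 0 := ne_of_gt hδ
    field_simp
    ring
  -- the remainder term tends to zero
  have hzero : Tendsto (fun δ : ℝ => (3 / δ ^ 3) * ∫ y in (x - δ)..(x + δ), φ y)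
      (nhdsWithin 0 (Set.Ioi 0)) (nhds 0) := by
    rw [NormedAddCommGroup.tendsto_nhds_zero]
    intro ε hε
    have hlo := hasDerivAt_iff_isLittleO.mp hd2
    have hb := hlo.def (show (0 : ℝ) < ε / 12 by positivity)
    rw [Metric.eventually_nhds_iff] at hb
    obtain ⟨r, hr, hball⟩ := hb
    filter_upwards [Ioo_mem_nhdsGT hr] with δ hδ
    obtain ⟨hδ0, hδr⟩ := hδ
    have hφbound : ∀ y ∈ Set.Icc (x - δ) (x + δ), ‖φ y‖ ≤ ε / 12 * δ * δ := by
      intro y hy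
      have hseg : ∀ t ∈ Set.Icc (x - δ) (x + δ), ‖deriv u t - c - m * (t - x)‖ ≤ ε / 12 * δ := by
        intro t ht
        rw [Set.mem_Icc] at ht
        have hdist : dist t x < r := by
          rw [Real.dist_eq, abs_lt]
          constructor <;> linarith
        have hball' := hball hdist
        simp only [smul_eq_mul, Real.norm_eq_abs] at hball' ⊢
        have habs : |t - x| ≤ δ := by rw [abs_le]; constructor <;> linarith
        calc |deriv u t - c - m * (t - x)|
            = |deriv u t - deriv u x - (t - x) * m| := by rw [hc]; ring_nf
          _ ≤ ε / 12 * |t - x| := hball'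
          _ ≤ ε / 12 * δ := by
              apply mul_le_mul_of_nonneg_left habs
              positivity
      have hxmem : x ∈ Set.Icc (x - δ) (x + δ) := by
        rw [Set.mem_Icc]; constructor <;> linarith
      have hmvt := (convex_Icc (x - δ) (x + δ)).norm_image_sub_le_of_norm_hasDerivWithin_le
        (fun t _ => (hφderiv t).hasDerivWithinAt) hseg hxmem hy
      rw [hφx, sub_zero] at hmvt
      calc ‖φ y‖ ≤ ε / 12 * δ * ‖y - x‖ := hmvt
        _ ≤ ε / 12 * δ * δ := by
            apply mul_le_mul_of_nonneg_left _ (by positivity)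
            rw [Real.norm_eq_abs, abs_le]
            rw [Set.mem_Icc] at hy
            constructor <;> linarith
    have hib : ‖∫ y in (x - δ)..(x + δ), φ y‖ ≤ (ε / 12 * δ * δ) * |(x + δ) - (x - δ)| := by
      apply intervalIntegral.norm_integral_le_of_norm_le_const
      intro y hy
      apply hφbound
      rw [Set.uIoc_of_le (by linarith)] at hy
      exact ⟨le_of_lt hy.1, hy.2⟩
    have habs2 : |(x + δ) - (x - δ)| = 2 * δ := by
      rw [show (x + δ) - (x - δ) = 2 * δ by ring, abs_of_pos (by linarith)]
    rw [habs2] at hib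
    have hnn : ‖(3 / δ ^ 3) * ∫ y in (x - δ)..(x + δ), φ y‖
        = (3 / δ ^ 3) * ‖∫ y in (x - δ)..(x + δ), φ y‖ := by
      rw [norm_mul, Real.norm_eq_abs (3 / δ ^ 3), abs_of_pos (by positivity)]
    rw [hnn]
    have hδ' : δ ≠ 0 := ne_of_gt hδ0
    calc (3 / δ ^ 3) * ‖∫ y in (x - δ)..(x + δ), φ y‖
        ≤ (3 / δ ^ 3) * ((ε / 12 * δ * δ) * (2 * δ)) := by
          apply mul_le_mul_of_nonneg_left hib (by positivity)
      _ = ε / 2 := by field_simp; ring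
      _ < ε := by linarith
  have key : Tendsto (fun δ : ℝ => (3 / δ ^ 3) * ∫ y in (x - δ)..(x + δ), (u y - u x))
      (nhdsWithin 0 (Set.Ioi 0)) (nhds m) := by
    have h0 : Tendsto (fun δ : ℝ => m + (3 / δ ^ 3) * ∫ y in (x - δ)..(x + δ), φ y)
        (nhdsWithin 0 (Set.Ioi 0)) (nhds (m + 0)) := tendsto_const_nhds.add hzero
    rw [add_zero] at h0
    apply h0.congr'
    filter_upwards [self_mem_nhdsWithin] with δ hδ
    exact (hsplit δ hδ).symm
  refine ⟨key, key.congr' ?_⟩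
  filter_upwards [self_mem_nhdsWithin] with δ (hδ : δ ∈ Set.Ioi 0)
  have hδ0 : (0 : ℝ) < δ := hδ
  have hset : (fun y : ℝ => (if |y - x| ≤ δ then 3 / (2 * δ ^ 3) else 0) * (u y - u x))
      = Set.indicator (Set.Icc (x - δ) (x + δ)) (fun y => 3 / (2 * δ ^ 3) * (u y - u x)) := by
    funext y
    by_cases h : |y - x| ≤ δ
    · rw [if_pos h, Set.indicator_of_mem]
      rw [Set.mem_Icc]
      rw [abs_le] at h
      constructor <;> linarith [h.1, h.2]
    · rw [if_neg h, Set.indicator_of_notMem, zero_mul]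
      intro hmem
      rw [Set.mem_Icc] at hmem
      exact h (abs_le.mpr ⟨by linarith [hmem.1], by linarith [hmem.2]⟩)
  rw [hset, integral_indicator measurableSet_Icc, integral_Icc_eq_integral_Ioc,
    ← intervalIntegral.integral_of_le (by linarith : x - δ ≤ x + δ),
    intervalIntegral.integral_const_mul]
  have hδ' : δ ≠ 0 := ne_of_gt hδ0
  field_simp
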